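/- For every natural number n ≥ 10, there are exactly thirty-seven (n−4)-dimensional numbers in the 2^n space; that is, T(n, n−4) = 37. -/

import Mathlib

/-- The dimension of a natural number: the number of prime factors counted with multiplicity. -/
def dimension (m : ℕ) : ℕ := m.primeFactorsList.length

/-- `T n d` is the number of natural numbers `m` with `1 ≤ m ≤ 2^n` and dimension `d`. -/
def T (n d : ℕ) : ℕ :=
  ((Finset.Icc 1 (2 ^ n)).filter (fun m => dimension m = d)).card

lemma dim_mul {a b : ℕ} (ha : a ≠ 0) (hb : b ≠ 0) :
    dimension (a * b) = dimension a + dimension b := by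
  have h := ArithmeticFunction.cardFactors_mul ha hb
  simpa [ArithmeticFunction.cardFactors_apply, dimension] using h

lemma dim_prime {p : ℕ} (hp : p.Prime) : dimension p = 1 := by
  simp [dimension, Nat.primeFactorsList_prime hp]

lemma dim_one : dimension 1 = 0 := by simp [dimension]

lemma dim_two_pow (k : ℕ) : dimension (2 ^ k) = k := by
  induction k with
  | zero => simpa using dim_one
  | succ k ih =>
    rw [pow_succ, dim_mul (by positivity) (by norm_num), ih, dim_prime Nat.prime_two]

/-- minFac step lemma: if `m ≥ 2` then `dimension m = dimension (m / m.minFac) + 1`. -/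
lemma dim_step {m : ℕ} (hm : 2 ≤ m) : dimension m = dimension (m / m.minFac) + 1 := by
  have hp := Nat.minFac_prime (by omega : m ≠ 1)
  have hd := Nat.minFac_dvd m
  have h0 : m ≠ 0 := by omega
  have hq : m / m.minFac ≠ 0 :=
    Nat.div_ne_zero_iff.2 ⟨hp.pos.ne', Nat.le_of_dvd (by omega) hd⟩
  have : m = m.minFac * (m / m.minFac) := (Nat.mul_div_cancel' hd).symm
  calc dimension m = dimension (m.minFac * (m / m.minFac)) := by rw [← this]
    _ = dimension m.minFac + dimension (m / m.minFac) := dim_mul hp.pos.ne' hq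
    _ = dimension (m / m.minFac) + 1 := by rw [dim_prime hp]; omega

/-- For odd `s ≥ 1`, `3 ^ dimension s ≤ s`. -/
lemma three_pow_dim_le {s : ℕ} (hs : s ≠ 0) (hodd : ¬ 2 ∣ s) : 3 ^ dimension s ≤ s := by
  induction s using Nat.strong_induction_on with
  | _ s ih =>
    rcases Nat.lt_or_ge s 2 with h | h
    · interval_cases s
      · omega
      · simp [dim_one]
    · have hp := Nat.minFac_prime (by omega : s ≠ 1)
      have hd := Nat.minFac_dvd s
      have hp3 : 3 ≤ s.minFac := by
        rcases hp.two_le.lt_or_eq with h' | h'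
        · omega
        · exact absurd (h' ▸ hd) hodd
      have hq : s / s.minFac ≠ 0 :=
        Nat.div_ne_zero_iff.2 ⟨hp.pos.ne', Nat.le_of_dvd (by omega) hd⟩
      have hqd : s / s.minFac ∣ s := Nat.div_dvd_of_dvd hd
      have hqodd : ¬ 2 ∣ s / s.minFac := fun h2 => hodd (h2.trans hqd)
      have hlt : s / s.minFac < s := Nat.div_lt_self (by omega) hp.one_lt
      have ihq := ih _ hlt hq hqodd
      rw [dim_step h, pow_succ]
      calc 3 ^ dimension (s / s.minFac) * 3 ≤ (s / s.minFac) * s.minFac :=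
            Nat.mul_le_mul ihq hp3
        _ = s := Nat.div_mul_cancel hd

/-- Fuel-based smallest-factor search, kernel-computable. -/
def minFacFuel : ℕ → ℕ → ℕ → ℕ
  | 0, _, k => k
  | fuel+1, m, k => if m % k = 0 then k else minFacFuel fuel m (k+1)

lemma minFacFuel_eq (fuel : ℕ) : ∀ m k, 2 ≤ k → k ≤ m → m ≤ k + fuel →
    (∀ d, 2 ≤ d → d < k → ¬ d ∣ m) → minFacFuel fuel m k = m.minFac := by
  induction fuel with
  | zero =>
    intro m k h2 hkm hmk hmin
    have hk : k = m := by omega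
    have h1 : m.minFac ∣ m := Nat.minFac_dvd m
    have h2' : 2 ≤ m.minFac := (Nat.minFac_prime (by omega : m ≠ 1)).two_le
    have h3 : m.minFac ≤ m := Nat.minFac_le (by omega)
    have h4 : ¬ m.minFac < m := fun h => hmin _ h2' (hk ▸ h) h1
    simp [minFacFuel, hk]; omega
  | succ fuel ih =>
    intro m k h2 hkm hmk hmin
    simp only [minFacFuel]
    split
    · next h =>
      have hd : k ∣ m := Nat.dvd_of_mod_eq_zero h
      have h1 : m.minFac ≤ k := Nat.minFac_le_of_dvd h2 hd
      have h2' : 2 ≤ m.minFac := (Nat.minFac_prime (by omega : m ≠ 1)).two_le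
      have h4 : ¬ m.minFac < k := fun h => hmin _ h2' h (Nat.minFac_dvd m)
      omega
    · next h =>
      have hnd : ¬ k ∣ m := fun hd => h (Nat.mod_eq_zero_of_dvd hd)
      have hklt : k < m := by
        rcases Nat.lt_or_ge k m with h' | h'
        · exact h'
        · have hkm' : k = m := by omega
          subst hkm'
          simp at h
      refine ih m (k+1) (by omega) (by omega) (by omega) ?_
      intro d hd2 hdk
      rcases Nat.lt_or_ge d k with h' | h'
      · exact hmin d hd2 h'
      · have : d = k := by omega
        rw [this]; exact hnd

/-- Fuel-based dimension, kernel-computable. -/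
def dimFuel : ℕ → ℕ → ℕ
  | 0, _ => 0
  | fuel+1, m => if m ≤ 1 then 0 else dimFuel fuel (m / minFacFuel m m 2) + 1

lemma dimFuel_eq : ∀ fuel m, m ≤ fuel → dimFuel fuel m = dimension m := by
  intro fuel
  induction fuel with
  | zero => intro m hm; interval_cases m; simp [dimFuel, dimension]
  | succ fuel ih =>
    intro m hm
    simp only [dimFuel]
    split
    · next h =>
      interval_cases m <;> simp [dimension]
    · next h =>
      have h2 : 2 ≤ m := by omega
      have hmf : minFacFuel m m 2 = m.minFac :=
        minFacFuel_eq m m 2 le_rfl h2 (by omega) (by omega)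
      rw [hmf, dim_step h2, ih]
      have h1 : m / m.minFac ≤ m / 2 :=
        Nat.div_le_div_left (Nat.minFac_prime (by omega)).two_le two_pos
      have h2' : m / 2 < m := Nat.div_lt_self (by omega) one_lt_two
      omega

set_option maxRecDepth 40000 in
set_option maxHeartbeats 4000000 in
lemma T_ten : T 10 6 = 37 := by
  have h : (Finset.Icc 1 (2^10)).filter (fun m => dimension m = 6)
      = (Finset.Icc 1 1024).filter (fun m => dimFuel 1024 m = 6) := by
    rw [show (2:ℕ)^10 = 1024 by norm_num]
    apply Finset.filter_congr
    intro m hm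
    simp only [Finset.mem_Icc] at hm
    rw [dimFuel_eq 1024 m hm.2]
  rw [T, h]
  decide

/-- For n ≥ 10 there are exactly thirty-seven (n−4)-dimensional numbers in the 2^n space. -/
theorem sub_four_dim_count (n : ℕ) (hn : 10 ≤ n) : T n (n - 4) = 37 := by
  set k := n - 10 with hk
  have hkn : k + 10 = n := by omega
  have hset : (Finset.Icc 1 (2^n)).filter (fun m => dimension m = n - 4)
      = Finset.image (fun m => 2^k * m)
          ((Finset.Icc 1 (2^10)).filter (fun m => dimension m = 6)) := by
    ext m
    simp only [Finset.mem_image, Finset.mem_filter, Finset.mem_Icc]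
    constructor
    · rintro ⟨⟨hm1, hm2⟩, hdim⟩
      have hm0 : m ≠ 0 := by omega
      set a := m.factorization 2 with ha
      set s := m / 2^a with hs
      have hms : 2^a * s = m := Nat.ordProj_mul_ordCompl_eq_self m 2
      have hs0 : s ≠ 0 := by
        intro h; rw [h, mul_zero] at hms; omega
      have hsodd : ¬ 2 ∣ s := Nat.not_dvd_ordCompl Nat.prime_two hm0
      have hdm : a + dimension s = n - 4 := by
        rw [← hdim, ← hms, dim_mul (by positivity) hs0, dim_two_pow]
      set b := dimension s with hb
      have hsle : 3 ^ b ≤ s := three_pow_dim_le hs0 hsodd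
      -- claim : k ≤ a
      have hak : k ≤ a := by
        by_contra hak
        push_neg at hak
        have hb7 : 7 ≤ b := by omega
        have h37 : (3:ℕ)^b = 2187 * 3^(b-7) := by
          rw [show (2187:ℕ) = 3^7 by norm_num, ← pow_add]
          congr 1; omega
        have h23 : (2:ℕ)^(b-7) ≤ 3^(b-7) := Nat.pow_le_pow_left (by norm_num) _
        have hexp : a + (b - 7) = n - 11 := by omega
        have key : 2187 * 2^(n-11) ≤ m := by
          calc 2187 * 2^(n-11) = 2^a * (2187 * 2^(b-7)) := by
                rw [← hexp, pow_add]; ring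
            _ ≤ 2^a * (2187 * 3^(b-7)) := by
                exact Nat.mul_le_mul_left _ (Nat.mul_le_mul_left _ h23)
            _ = 2^a * 3^b := by rw [h37]
            _ ≤ 2^a * s := Nat.mul_le_mul_left _ hsle
            _ = m := hms
        have h2n : (2:ℕ)^n = 2048 * 2^(n-11) := by
          rw [show (2048:ℕ) = 2^11 by norm_num, ← pow_add]
          congr 1; omega
        have hpos : 0 < (2:ℕ)^(n-11) := by positivity
        have : 2187 * 2^(n-11) ≤ 2048 * 2^(n-11) := by omega
        have := Nat.le_of_mul_le_mul_right this hpos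
        omega
      -- now 2^k ∣ m
      have hdvd : 2^k ∣ m := by
        rw [← hms]
        exact Dvd.dvd.mul_right (pow_dvd_pow 2 hak) s
      refine ⟨m / 2^k, ⟨⟨?_, ?_⟩, ?_⟩, ?_⟩
      · exact Nat.one_le_iff_ne_zero.2
          (Nat.div_ne_zero_iff.2 ⟨by positivity, Nat.le_of_dvd (by omega) hdvd⟩)
      · have : 2^k * (m / 2^k) = m := Nat.mul_div_cancel' hdvd
        have h2n : (2:ℕ)^n = 2^k * 2^10 := by rw [← pow_add, hkn]
        have hpos : 0 < (2:ℕ)^k := by positivity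
        have hle : 2^k * (m / 2^k) ≤ 2^k * 2^10 := by omega
        exact Nat.le_of_mul_le_mul_left hle hpos
      · have hmul : 2^k * (m / 2^k) = m := Nat.mul_div_cancel' hdvd
        have hq0 : m / 2^k ≠ 0 := Nat.div_ne_zero_iff.2 ⟨by positivity, Nat.le_of_dvd (by omega) hdvd⟩
        have : dimension (2^k * (m / 2^k)) = k + dimension (m / 2^k) := by
          rw [dim_mul (by positivity) hq0, dim_two_pow]
        rw [hmul] at this
        omega
      · exact Nat.mul_div_cancel' hdvd
    · rintro ⟨m', ⟨⟨h1, h2⟩, hdim⟩, rfl⟩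
      have hm'0 : m' ≠ 0 := by omega
      refine ⟨⟨?_, ?_⟩, ?_⟩
      · have : 0 < 2^k * m' := by positivity
        omega
      · calc 2^k * m' ≤ 2^k * 2^10 := Nat.mul_le_mul_left _ h2
          _ = 2^n := by rw [← pow_add, hkn]
      · rw [dim_mul (by positivity) hm'0, dim_two_pow, hdim]
        omega
  have hinj : Function.Injective (fun m : ℕ => 2^k * m) := fun a b h => by
    have : (2:ℕ)^k ≠ 0 := by positivity
    simpa [this] using h
  have := T_ten
  rw [T, hset, Finset.card_image_of_injective _ hinj, ← T]
  exact this
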